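/- Let w(s; α) = 2·arctan(tan(α/2) + s) − α for α ∈ (−π, π) and s ∈ ℝ. Then for every s ≠ 0 and every α ∈ (0, π), w(s; −α) > w(s; α). -/

import Mathlib

open Real

lemma arctan_key (t s : ℝ) (ht : 0 < t) (hs : 0 < s) :
    Real.arctan (t + s) + Real.arctan (t - s) < 2 * Real.arctan t := by
  set g : ℝ → ℝ := fun x => Real.arctan (t + x) + Real.arctan (t - x) with hg
  have hderiv : ∀ x : ℝ, HasDerivAt g (1 / (1 + (t + x) ^ 2) - 1 / (1 + (t - x) ^ 2)) x := by
    intro x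
    have h1 : HasDerivAt (fun x : ℝ => Real.arctan (t + x)) (1 / (1 + (t + x) ^ 2)) x := by
      have := (Real.hasDerivAt_arctan (t + x)).comp x
        ((hasDerivAt_const x t).add (hasDerivAt_id x))
      simpa [Function.comp_def] using this
    have h2 : HasDerivAt (fun x : ℝ => Real.arctan (t - x)) (-(1 / (1 + (t - x) ^ 2))) x := by
      have := (Real.hasDerivAt_arctan (t - x)).comp x
        ((hasDerivAt_const x t).sub (hasDerivAt_id x))
      simpa [Function.comp_def] using this
    simpa [sub_eq_add_neg, hg, Pi.add_def] using h1.add h2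
  have hanti : StrictAntiOn g (Set.Ici (0:ℝ)) := by
    apply strictAntiOn_of_deriv_neg (convex_Ici 0)
    · exact fun x _ => ((hderiv x).continuousAt).continuousWithinAt
    · intro x hx
      rw [interior_Ici] at hx
      rw [(hderiv x).deriv]
      have hx0 : 0 < x := hx
      have h1 : (0:ℝ) < 1 + (t - x) ^ 2 := by positivity
      have h2 : (0:ℝ) < 1 + (t + x) ^ 2 := by positivity
      have hlt : 1 + (t - x) ^ 2 < 1 + (t + x) ^ 2 := by nlinarith
      have := one_div_lt_one_div_of_lt h1 hlt
      linarith
  have := hanti (Set.self_mem_Ici) (Set.mem_Ici.mpr hs.le) hs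
  simpa [hg, two_mul] using this

theorem w_antisym (s : ℝ) (hs : s ≠ 0) (α : ℝ) (hα : α ∈ Set.Ioo 0 Real.pi) :
    2 * Real.arctan (Real.tan (-α / 2) + s) - (-α) >
      2 * Real.arctan (Real.tan (α / 2) + s) - α := by
  obtain ⟨hα0, hαπ⟩ := hα
  set t := Real.tan (α / 2) with ht
  have hbound : -(Real.pi / 2) < α / 2 ∧ α / 2 < Real.pi / 2 := by
    constructor <;> nlinarith [Real.pi_pos]
  have ht0 : 0 < t := Real.tan_pos_of_pos_of_lt_pi_div_two (by linarith) hbound.2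
  have harctan : Real.arctan t = α / 2 := Real.arctan_tan hbound.1 hbound.2
  have hneg : Real.tan (-α / 2) = -t := by
    rw [show -α / 2 = -(α / 2) by ring, Real.tan_neg]
  have key : Real.arctan (t + s) + Real.arctan (t - s) < 2 * Real.arctan t := by
    rcases lt_or_gt_of_ne hs with h | h
    · have := arctan_key t (-s) ht0 (by linarith)
      have e1 : t + -s = t - s := by ring
      have e2 : t - -s = t + s := by ring
      rw [e1, e2] at this
      linarith
    · exact arctan_key t s ht0 h
  rw [hneg]
  have : Real.arctan (-t + s) = -Real.arctan (t - s) := by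
    rw [show -t + s = -(t - s) by ring, Real.arctan_neg]
  rw [this]
  rw [harctan] at key
  linarith
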